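/- Let r be a power of an odd prime p, q = r², write q − 1 = e·f, let s be an even integer with s | f and 2s | r + 1, and set D = s(r−1)/gcd(s(r−1), f). Then for every t with 1 ≤ t ≤ D, the number t·f + 2 belongs to Σ(eg, q); moreover, if e is even, then t·f belongs to Σ(g, q). -/

import Mathlib

open Finset

/-- Δ_S(a) = ∏_{b ∈ S, b ≠ a} (a − b). -/
def deltaS {F : Type*} [Field F] [DecidableEq F] (S : Finset F) (a : F) : F :=
  ∏ b ∈ S.erase a, (a - b)

/-- n ∈ Σ(g,q): n is even, n ≥ 2, and there is S ⊆ F_q with |S| = n such that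
the quadratic-character values η_q(Δ_S(a)) agree for all a ∈ S
(equivalently, the Δ_S(a) are all squares or all nonsquares). -/
def SigmaG (F : Type*) [Field F] [DecidableEq F] (n : ℕ) : Prop :=
  Even n ∧ 2 ≤ n ∧ ∃ S : Finset F, S.card = n ∧
    ((∀ a ∈ S, IsSquare (deltaS S a)) ∨ (∀ a ∈ S, ¬ IsSquare (deltaS S a)))

/-- n ∈ Σ(eg,q): n is even, n ≥ 2, and there is S ⊆ F_q with |S| = n − 1 such that
η_q(−Δ_S(a)) = 1, i.e. −Δ_S(a) is a square, for all a ∈ S. -/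
def SigmaEG (F : Type*) [Field F] [DecidableEq F] (n : ℕ) : Prop :=
  Even n ∧ 2 ≤ n ∧ ∃ S : Finset F, S.card = n - 1 ∧
    ∀ a ∈ S, IsSquare (-(deltaS S a))

set_option linter.unusedSectionVars false
set_option maxHeartbeats 1000000

namespace Stmt13Aux
open Polynomial

section Helpers
variable {F : Type*} [Field F] [DecidableEq F] {f : ℕ} {ζ : F}



lemma prod_nthRoots_eval (hf : 0 < f) (hζ : IsPrimitiveRoot ζ f) (z : F) :
    ∏ x ∈ nthRootsFinset f (1 : F), (z - x) = z ^ f - 1 := by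
  have h := congrArg (Polynomial.eval z) (X_pow_sub_one_eq_prod hf hζ)
  simpa [eval_prod] using h.symm

lemma prod_nthRoots_erase_one (hf : 0 < f) (hζ : IsPrimitiveRoot ζ f) :
    ∏ x ∈ (nthRootsFinset f (1 : F)).erase 1, (1 - x) = (f : F) := by
  have key : ((X : F[X]) - C 1) * ∏ x ∈ (nthRootsFinset f (1 : F)).erase 1, (X - C x)
      = (X - C 1) * ∑ i ∈ Finset.range f, X ^ i := by
    rw [Finset.mul_prod_erase (nthRootsFinset f (1 : F)) (fun x => X - C x)
      (one_mem_nthRootsFinset hf), ← X_pow_sub_one_eq_prod hf hζ, ← geom_sum_mul, mul_comm, map_one]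
  have key2 := mul_left_cancel₀ (X_sub_C_ne_zero 1) key
  have h := congrArg (Polynomial.eval 1) key2
  simpa [eval_prod, eval_finset_sum] using h

lemma prod_nthRoots_erase (hf : 0 < f) (hζ : IsPrimitiveRoot ζ f) {z : F}
    (hz : z ∈ nthRootsFinset f (1 : F)) :
    ∏ x ∈ (nthRootsFinset f (1 : F)).erase z, (z - x) = (f : F) * z ^ (f - 1) := by
  have hz1 : z ^ f = 1 := (mem_nthRootsFinset hf 1).mp hz
  have hzne : z ≠ 0 := ne_zero_of_mem_nthRootsFinset one_ne_zero hz
  have himg : (nthRootsFinset f (1 : F)).erase z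
      = Finset.image (fun x => z * x) ((nthRootsFinset f (1 : F)).erase 1) := by
    ext b
    simp only [Finset.mem_erase, Finset.mem_image, mem_nthRootsFinset hf (1 : F)]
    constructor
    · rintro ⟨hb1, hb2⟩
      refine ⟨z⁻¹ * b, ⟨fun h => hb1 ?_, by rw [mul_pow, inv_pow, hz1, hb2, inv_one, one_mul]⟩,
        by field_simp⟩
      field_simp at h; exact h
    · rintro ⟨x, ⟨hx1, hx2⟩, rfl⟩
      refine ⟨fun h => hx1 ?_, by rw [mul_pow, hz1, hx2, one_mul]⟩
      have : z * x = z * 1 := by rw [mul_one]; exact h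
      exact mul_left_cancel₀ hzne this
  rw [himg, Finset.prod_image (fun a _ b _ h => mul_left_cancel₀ hzne h)]
  have : ∀ x ∈ (nthRootsFinset f (1 : F)).erase 1, z - z * x = z * (1 - x) := by intros; ring
  rw [Finset.prod_congr rfl this, Finset.prod_mul_distrib, Finset.prod_const,
    Finset.card_erase_of_mem (one_mem_nthRootsFinset hf), hζ.card_nthRootsFinset,
    prod_nthRoots_erase_one hf hζ, mul_comm]

end Helpers

section Master
variable {F : Type*} [Field F] [Fintype F] [DecidableEq F] {f : ℕ} {ζ : F}

lemma master (hf : 0 < f) (hζ : IsPrimitiveRoot ζ f) (t : ℕ) (y : ℕ → F)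
    (hy : ∀ i < t, y i ≠ 0)
    (hinj : ∀ i < t, ∀ j < t, y i ^ f = y j ^ f → i = j) :
    ∃ S : Finset F, S.card = t * f ∧ 0 ∉ S ∧
      (∀ a ∈ S, ∃ i < t, a ≠ 0 ∧ a ^ f = y i ^ f ∧
        deltaS S a = (f : F) * a ^ (f - 1) * ∏ j ∈ (Finset.range t).erase i, (y i ^ f - y j ^ f) ∧
        deltaS (insert 0 S) a = a * deltaS S a) ∧
      deltaS (insert 0 S) 0 = ∏ i ∈ Finset.range t, (-(y i ^ f)) := by
  classical
  set μ := nthRootsFinset f (1 : F) with hμ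
  set B : ℕ → Finset F := fun i => Finset.image (fun x => y i * x) μ with hB
  have hBmem : ∀ i < t, ∀ b : F, b ∈ B i ↔ b ^ f = y i ^ f := by
    intro i hi b
    constructor
    · intro hb
      obtain ⟨x, hx, rfl⟩ := Finset.mem_image.mp hb
      rw [mul_pow, (mem_nthRootsFinset hf 1).mp hx, mul_one]
    · intro hb
      refine Finset.mem_image.mpr ⟨(y i)⁻¹ * b, ?_, mul_inv_cancel_left₀ (hy i hi) b⟩
      rw [mem_nthRootsFinset hf 1, mul_pow, hb, inv_pow, inv_mul_cancel₀ (pow_ne_zero _ (hy i hi))]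
  have hyinj : ∀ i < t, Function.Injective (fun x : F => y i * x) := by
    intro i hi a b h
    exact mul_left_cancel₀ (hy i hi) h
  have hBprod : ∀ i < t, ∀ z : F, ∏ b ∈ B i, (z - b) = z ^ f - y i ^ f := by
    intro i hi z
    rw [hB, Finset.prod_image (fun a _ b _ h => mul_left_cancel₀ (hy i hi) h)]
    have h1 : ∀ x ∈ μ, z - y i * x = y i * ((y i)⁻¹ * z - x) := by
      intro x _; rw [mul_sub, mul_inv_cancel_left₀ (hy i hi)]
    rw [Finset.prod_congr rfl h1, Finset.prod_mul_distrib, Finset.prod_const,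
      hζ.card_nthRootsFinset, prod_nthRoots_eval hf hζ, mul_pow, inv_pow, mul_sub, mul_one,
      ← mul_assoc, mul_inv_cancel₀ (pow_ne_zero f (hy i hi)), one_mul]
  have hBcard : ∀ i < t, (B i).card = f := by
    intro i hi
    rw [hB, Finset.card_image_of_injective _ (hyinj i hi), hζ.card_nthRootsFinset]
  have hBerase : ∀ i < t, ∀ a ∈ B i, ∏ b ∈ (B i).erase a, (a - b) = (f : F) * a ^ (f - 1) := by
    intro i hi a ha
    obtain ⟨x₀, hx₀, rfl⟩ := Finset.mem_image.mp ha
    rw [hB]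
    rw [← Finset.image_erase (hyinj i hi),
      Finset.prod_image (fun a _ b _ h => mul_left_cancel₀ (hy i hi) h)]
    have h1 : ∀ x ∈ μ.erase x₀, y i * x₀ - y i * x = y i * (x₀ - x) := by intro x _; ring
    rw [Finset.prod_congr rfl h1, Finset.prod_mul_distrib, Finset.prod_const,
      Finset.card_erase_of_mem hx₀, hζ.card_nthRootsFinset, prod_nthRoots_erase hf hζ hx₀,
      mul_pow]
    ring
  have hdisj : ∀ i ∈ Finset.range t, ∀ j ∈ Finset.range t, i ≠ j → Disjoint (B i) (B j) := by
    intro i hi j hj hij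
    rw [Finset.mem_range] at hi hj
    rw [Finset.disjoint_left]
    intro b hbi hbj
    exact hij (hinj i hi j hj (((hBmem i hi b).mp hbi).symm.trans ((hBmem j hj b).mp hbj)))
  have h0S : 0 ∉ (Finset.range t).biUnion B := by
    intro h0
    obtain ⟨i, hi, hmem⟩ := Finset.mem_biUnion.mp h0
    rw [Finset.mem_range] at hi
    have := (hBmem i hi 0).mp hmem
    rw [zero_pow hf.ne'] at this
    exact hy i hi (pow_eq_zero_iff hf.ne' |>.mp this.symm)
  refine ⟨(Finset.range t).biUnion B, ?_, h0S, ?_, ?_⟩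
  · rw [Finset.card_biUnion hdisj]
    rw [Finset.sum_congr rfl (fun i hi => hBcard i (Finset.mem_range.mp hi)),
      Finset.sum_const, Finset.card_range, smul_eq_mul]
  · intro a ha
    obtain ⟨i, hi, haB⟩ := Finset.mem_biUnion.mp ha
    rw [Finset.mem_range] at hi
    have haf : a ^ f = y i ^ f := (hBmem i hi a).mp haB
    have hane : a ≠ 0 := by
      intro h; subst h
      rw [zero_pow hf.ne'] at haf
      exact hy i hi (pow_eq_zero_iff hf.ne' |>.mp haf.symm)
    have herase : ((Finset.range t).biUnion B).erase a
        = (Finset.range t).biUnion (fun j => (B j).erase a) := by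
      ext b
      simp only [Finset.mem_erase, Finset.mem_biUnion]
      tauto
    have hdisj2 : ∀ x ∈ Finset.range t, ∀ z ∈ Finset.range t, x ≠ z →
        Disjoint ((B x).erase a) ((B z).erase a) := fun x hx z hz hxz =>
      Finset.disjoint_of_subset_left (Finset.erase_subset _ _)
        (Finset.disjoint_of_subset_right (Finset.erase_subset _ _) (hdisj x hx z hz hxz))
    have hdelta : deltaS ((Finset.range t).biUnion B) a
        = (f : F) * a ^ (f - 1) * ∏ j ∈ (Finset.range t).erase i, (y i ^ f - y j ^ f) := by
      rw [deltaS, herase, Finset.prod_biUnion hdisj2,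
        ← Finset.mul_prod_erase (Finset.range t) _ (Finset.mem_range.mpr hi),
        hBerase i hi a haB]
      congr 1
      refine Finset.prod_congr rfl fun j hj => ?_
      obtain ⟨hji, hjt⟩ := Finset.mem_erase.mp hj
      rw [Finset.mem_range] at hjt
      have hanotB : a ∉ B j := by
        intro hmem
        exact hji (hinj j hjt i hi (((hBmem j hjt a).mp hmem).symm.trans haf))
      rw [Finset.erase_eq_of_notMem hanotB, hBprod j hjt a, haf]
    refine ⟨i, hi, hane, haf, hdelta, ?_⟩
    rw [deltaS, Finset.erase_insert_of_ne (Ne.symm hane),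
      Finset.prod_insert (fun h => h0S (Finset.mem_of_mem_erase h)), sub_zero]
    rfl
  · rw [deltaS, Finset.erase_insert h0S, Finset.prod_biUnion hdisj]
    refine Finset.prod_congr rfl fun j hj => ?_
    rw [hBprod j (Finset.mem_range.mp hj) 0, zero_pow hf.ne', zero_sub]

lemma buildS (r G k f t : ℕ) (hcard : Fintype.card F = r ^ 2)
    (hfact : r ^ 2 - 1 = G * k * f) (hr : 2 ≤ r) (hf : 0 < f) (ht : t ≤ G) :
    ∃ (S : Finset F) (c : ℕ → F), S.card = t * f ∧ 0 ∉ S ∧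
      (∀ i < t, c i ≠ 0) ∧
      (∀ i < t, ∀ j < t, c i = c j → i = j) ∧
      (∀ i < t, ∀ N : ℕ, G ∣ N → c i ^ N = 1) ∧
      (∀ a ∈ S, ∃ i < t, a ≠ 0 ∧ a ^ f = c i ∧
        deltaS S a = (f : F) * a ^ (f - 1) * ∏ j ∈ (Finset.range t).erase i, (c i - c j) ∧
        deltaS (insert 0 S) a = a * deltaS S a) ∧
      deltaS (insert 0 S) 0 = ∏ i ∈ Finset.range t, (-(c i)) := by
  classical
  -- setup: q - 1 and positivity
  have hr4 : 4 ≤ r ^ 2 := by nlinarith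
  have hq1 : 0 < r ^ 2 - 1 := by omega
  have hGpos : 0 < G := by
    rcases Nat.eq_zero_or_pos G with h | h
    · rw [h, zero_mul, zero_mul] at hfact; omega
    · exact h
  have hkpos : 0 < k := by
    rcases Nat.eq_zero_or_pos k with h | h
    · rw [h, mul_zero, zero_mul] at hfact; omega
    · exact h
  -- generator of Fˣ
  obtain ⟨γ, hγ⟩ := IsCyclic.exists_generator (α := Fˣ)
  have hord : orderOf γ = r ^ 2 - 1 := by
    rw [orderOf_eq_card_of_forall_mem_zpowers hγ, Nat.card_eq_fintype_card,
      Fintype.card_units, hcard]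
  -- primitive f-th root of unity
  have hprim : IsPrimitiveRoot γ (r ^ 2 - 1) := hord ▸ IsPrimitiveRoot.orderOf γ
  have hζu : IsPrimitiveRoot (γ ^ (G * k)) f :=
    hprim.pow hq1 (by rw [hfact, mul_assoc])
  have hζ : IsPrimitiveRoot ((γ : Fˣ) ^ (G * k) : Fˣ).val f :=
    IsPrimitiveRoot.coe_units_iff.mpr hζu
  -- the w element of order G
  set w : Fˣ := γ ^ (k * f) with hw
  have hwG : orderOf w = G := by
    rw [hw, orderOf_pow, hord]
    have hkf : 0 < k * f := Nat.mul_pos hkpos hf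
    have : r ^ 2 - 1 = G * (k * f) := by rw [hfact, mul_assoc]
    rw [this, Nat.gcd_eq_right ⟨G, by ring⟩, Nat.mul_div_cancel _ hkf]
  have hwinj : ∀ i < t, ∀ j < t, w ^ i = w ^ j → i = j := by
    intro i hi j hj hij
    exact pow_injOn_Iio_orderOf (x := w)
      (by rw [hwG]; exact Set.mem_Iio.mpr (lt_of_lt_of_le hi ht))
      (by rw [hwG]; exact Set.mem_Iio.mpr (lt_of_lt_of_le hj ht)) hij
  have hrwu : ∀ n : ℕ, ((γ ^ k) ^ n) ^ f = w ^ n := by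
    intro n
    rw [hw]
    simp only [← pow_mul]
    congr 1
    ring
  set y : ℕ → F := fun i => ((γ ^ k) ^ i : Fˣ) with hy
  have hyf : ∀ n, y n ^ f = ((w ^ n : Fˣ) : F) := by
    intro n
    simp only [hy]
    rw [← Units.val_pow_eq_pow_val, hrwu]
  have hwone : w ^ G = 1 := by rw [← hwG, pow_orderOf_eq_one]
  have key := master (F := F) hf hζ t y (fun i _ => by simp only [hy]; exact Units.ne_zero _)
    (fun i hi j hj hij => hwinj i hi j hj (Units.ext (by rw [← hyf, ← hyf]; exact hij)))
  obtain ⟨S, hScard, hS0, hSmem, hS0delta⟩ := key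
  refine ⟨S, fun i => y i ^ f, hScard, hS0, ?_, ?_, ?_, hSmem, hS0delta⟩
  · intro i hi
    beta_reduce
    rw [hyf]
    exact Units.ne_zero _
  · intro i hi j hj hij
    beta_reduce at hij
    rw [hyf, hyf] at hij
    exact hwinj i hi j hj (Units.ext hij)
  · intro i hi N hN
    obtain ⟨M, rfl⟩ := hN
    beta_reduce
    rw [hyf, ← Units.val_pow_eq_pow_val, ← pow_mul]
    have harith : i * (G * M) = G * (i * M) := by ring
    rw [harith, pow_mul, hwone, one_pow, Units.val_one]

end Master
end Stmt13Aux

open Stmt13Aux in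
theorem stmt_13 (p m : ℕ) (hp : p.Prime) (hodd : p ≠ 2) (hm : 0 < m)
    (r : ℕ) (hr : r = p ^ m)
    (F : Type*) [Field F] [Fintype F] [DecidableEq F] (hF : Fintype.card F = r ^ 2)
    (e f s t : ℕ) (hef : r ^ 2 - 1 = e * f)
    (hse : Even s) (hsf : s ∣ f) (hsr : 2 * s ∣ r + 1)
    (ht1 : 1 ≤ t) (ht2 : t ≤ s * (r - 1) / Nat.gcd (s * (r - 1)) f) :
    SigmaEG F (t * f + 2) ∧ (Even e → SigmaG F (t * f)) := by
  classical
  -- basic numerics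
  have hp3 : 3 ≤ p := by have := hp.two_le; omega
  have hr3 : 3 ≤ r := by
    rw [hr]
    calc 3 ≤ p := hp3
    _ = p ^ 1 := (pow_one p).symm
    _ ≤ p ^ m := Nat.pow_le_pow_right (by omega) hm
  have hrodd : Odd r := by rw [hr]; exact (hp.odd_of_ne_two hodd).pow
  have hq1pos : 0 < r ^ 2 - 1 := by
    have h9 : 3 * 3 ≤ r * r := Nat.mul_le_mul hr3 hr3
    have hsq : r ^ 2 = r * r := sq r
    omega
  have hfpos : 0 < f := by
    rcases Nat.eq_zero_or_pos f with h | h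
    · rw [h, mul_zero] at hef; omega
    · exact h
  have hepos : 0 < e := by
    rcases Nat.eq_zero_or_pos e with h | h
    · rw [h, zero_mul] at hef; omega
    · exact h
  have hspos : 0 < s := by
    rcases Nat.eq_zero_or_pos s with h | h
    · rw [h] at hsf; rw [Nat.zero_dvd.mp hsf] at hfpos; omega
    · exact h
  have hfeven : Even f := by
    obtain ⟨u, hu⟩ := hsf
    rw [hu]; exact hse.mul_right u
  have hf2 : 2 ≤ f := by
    obtain ⟨a, ha⟩ := hfeven; omega
  have hq1 : r ^ 2 - 1 = (r - 1) * (r + 1) := by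
    obtain ⟨v, hv⟩ : ∃ v, r = v + 1 := ⟨r - 1, by omega⟩
    subst hv
    have h1 : (v + 1) ^ 2 = v * (v + 2) + 1 := by ring
    have h2 : (v + 1 - 1) * (v + 1 + 1) = v * (v + 2) := by simp
    omega
  set d := Nat.gcd (s * (r - 1)) f with hd
  have hdpos : 0 < d := Nat.gcd_pos_of_pos_right _ hfpos
  set D := s * (r - 1) / d with hD
  have hdD : d * D = s * (r - 1) := Nat.mul_div_cancel' (Nat.gcd_dvd_left _ _)
  have hsd : s ∣ d := Nat.dvd_gcd (dvd_mul_right s _) hsf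
  have hDr1 : D ∣ r - 1 := by
    obtain ⟨d', hd'⟩ := hsd
    have h1 : s * (d' * D) = s * (r - 1) := by rw [← hdD, hd']; ring
    exact ⟨d', by rw [← Nat.eq_of_mul_eq_mul_left hspos h1]; ring⟩
  have hsr1 : s ∣ r + 1 := dvd_trans (Dvd.intro_left 2 rfl) hsr
  have hgm : Nat.gcd (s * (r - 1) * (r + 1)) (f * (r + 1)) = d * (r + 1) :=
    Nat.gcd_mul_right _ _ _
  have hA : s * f ∣ d * (r + 1) := by
    rw [← hgm]
    refine Nat.dvd_gcd ⟨e, ?_⟩ ?_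
    · rw [mul_assoc, ← hq1, hef]; ring
    · obtain ⟨w, hw⟩ := hsr1
      exact ⟨w, by rw [hw]; ring⟩
  have hDe : D ∣ e := by
    have h1 : (s * (r - 1)) * f ∣ (d * e) * f := by
      have key : (d * e) * f = (d * (r + 1)) * (r - 1) := by
        rw [mul_assoc d e f, ← hef, hq1]; ring
      obtain ⟨c, hc⟩ := hA
      exact ⟨c, by rw [key, hc]; ring⟩
    have h2 : s * (r - 1) ∣ d * e := (Nat.mul_dvd_mul_iff_right hfpos).mp h1
    rw [← hdD] at h2
    exact (Nat.mul_dvd_mul_iff_left hdpos).mp h2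
  have htD : t ≤ D := ht2
  have hTG : t ≤ Nat.gcd e (r - 1) := by
    have h1 : D ∣ Nat.gcd e (r - 1) := Nat.dvd_gcd hDe hDr1
    have h2 : 0 < Nat.gcd e (r - 1) := Nat.gcd_pos_of_pos_left _ hepos
    exact le_trans htD (Nat.le_of_dvd h2 h1)
  -- characteristic facts
  haveI hpfact : Fact p.Prime := ⟨hp⟩
  haveI hchp : CharP F (ringChar F) := ringChar.charP F
  obtain ⟨n, hnprime, hncard⟩ := FiniteField.card F (ringChar F)
  have hcp : ringChar F = p := by
    have hcard2m : Fintype.card F = p ^ (2 * m) := by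
      rw [hF, hr, ← pow_mul, mul_comm]
    have h1 : ringChar F ∣ p ^ (2 * m) := by
      rw [← hcard2m, hncard]
      exact dvd_pow_self _ (by positivity)
    exact (Nat.prime_dvd_prime_iff_eq hnprime hp).mp (hnprime.dvd_of_dvd_pow h1)
  haveI hcharp : CharP F p := hcp ▸ hchp
  have hchar2 : ringChar F ≠ 2 := by rw [hcp]; omega
  -- the "fixed by x ↦ x^r" machinery
  have hiter : ∀ x : F, x ^ p = x → ∀ M : ℕ, x ^ (p ^ M) = x := by
    intro x hx M
    induction M with
    | zero => simp
    | succ M ih => rw [pow_succ, pow_mul, ih, hx]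
  have hnatfix : ((f : ℕ) : F) ^ r = ((f : ℕ) : F) := by
    rw [hr]
    refine hiter _ ?_ m
    rw [← frobenius_def (R := F) (p := p) (x := ((f : ℕ) : F)), map_natCast]
  have hsubfix : ∀ x y : F, x ^ r = x → y ^ r = y → (x - y) ^ r = x - y := by
    intro x y hx hy
    rw [hr] at hx hy ⊢
    rw [sub_pow_char_pow, hx, hy]
  have hrfix1 : ∀ x : F, x ≠ 0 → x ^ r = x → x ^ (r - 1) = 1 := by
    intro x hx hxr
    have h1 : x ^ (r - 1) * x = 1 * x := by
      rw [one_mul, ← pow_succ, show r - 1 + 1 = r from by omega, hxr]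
    exact mul_right_cancel₀ hx h1
  have hfix1r : ∀ x : F, x ^ (r - 1) = 1 → x ^ r = x := by
    intro x h1
    rw [show r = (r - 1) + 1 from by omega, pow_succ, h1, one_mul]
  have hfne : ((f : ℕ) : F) ≠ 0 := by
    intro h
    have hdvd : p ∣ f := (CharP.cast_eq_zero_iff F p f).mp h
    have h2 : p ∣ r ^ 2 - 1 := hef ▸ Dvd.dvd.mul_left hdvd e
    have h3 : p ∣ r ^ 2 := by rw [hr, ← pow_mul]; exact dvd_pow_self p (by positivity)
    have h4 : r ^ 2 - (r ^ 2 - 1) = 1 := by omega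
    have h5 := Nat.dvd_sub h3 h2
    rw [h4] at h5
    have := Nat.le_of_dvd one_pos h5
    omega
  -- square criteria
  obtain ⟨v, hv⟩ := hrodd
  have hoddr : Odd r := ⟨v, by omega⟩
  have hevr1 : Even (r - 1) := ⟨v, by omega⟩
  have hpowhalf : ∀ x : F, x ^ (r - 1) = 1 → x ^ (Fintype.card F / 2) = 1 := by
    have hc2 : Fintype.card F / 2 = (r - 1) * (v + 1) := by
      rw [hF]
      have h1 : r ^ 2 = (r - 1) * (v + 1) * 2 + 1 := by
        have hr1 : r - 1 = 2 * v := by omega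
        have : r ^ 2 = (2 * v) * (v + 1) * 2 + 1 := by rw [hv]; ring
        rw [hr1]; exact this
      omega
    intro x hx
    rw [hc2, pow_mul, hx, one_pow]
  have hsq : ∀ x : F, x ≠ 0 → x ^ (r - 1) = 1 → IsSquare x := by
    intro x hx h1
    rw [FiniteField.isSquare_iff hchar2 hx]
    exact hpowhalf x h1
  have hsqneg : ∀ x : F, x ≠ 0 → x ^ (r - 1) = 1 → IsSquare (-x) := by
    intro x hx h1
    refine hsq _ (neg_ne_zero.mpr hx) ?_
    rw [hevr1.neg_pow, h1]
  constructor
  · -- SigmaEG part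
    set G := Nat.gcd e (r - 1) with hG
    have hGe : G ∣ e := Nat.gcd_dvd_left _ _
    have hGr1 : G ∣ r - 1 := Nat.gcd_dvd_right _ _
    have hfact : r ^ 2 - 1 = G * (e / G) * f := by
      rw [Nat.mul_div_cancel' hGe, hef]
    obtain ⟨S, c, hScard, hS0, hcne, hcinj, hcpow, hmem, hdelta0⟩ :=
      buildS r G (e / G) f t hF hfact (by omega) hfpos hTG
    have hcr : ∀ i < t, c i ^ r = c i := fun i hi =>
      hfix1r _ (hcpow i hi (r - 1) hGr1)
    have hcfix1 : ∀ i < t, c i ^ (r - 1) = 1 := fun i hi => hcpow i hi (r - 1) hGr1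
    refine ⟨(by exact (hfeven.mul_left t).add (by decide) : Even (t * f + 2)), by omega,
      insert 0 S, ?_, ?_⟩
    · rw [Finset.card_insert_of_notMem hS0, hScard]; omega
    · intro a ha
      rcases Finset.mem_insert.mp ha with rfl | haS
      · -- a = 0
        rw [hdelta0]
        have hXfix : (∏ i ∈ Finset.range t, (-(c i))) ^ r = ∏ i ∈ Finset.range t, (-(c i)) := by
          rw [← Finset.prod_pow]
          refine Finset.prod_congr rfl fun i hi => ?_
          rw [hoddr.neg_pow, hcr i (Finset.mem_range.mp hi)]
        have hXne : (∏ i ∈ Finset.range t, (-(c i))) ≠ 0 :=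
          Finset.prod_ne_zero_iff.mpr fun i hi =>
            neg_ne_zero.mpr (hcne i (Finset.mem_range.mp hi))
        exact hsqneg _ hXne (hrfix1 _ hXne hXfix)
      · obtain ⟨i, hi, hane, haf, hdel, hdel'⟩ := hmem a haS
        set P := ∏ j ∈ (Finset.range t).erase i, (c i - c j) with hP
        have hPfix : P ^ r = P := by
          rw [hP, ← Finset.prod_pow]
          refine Finset.prod_congr rfl fun j hj => ?_
          obtain ⟨hji, hjt⟩ := Finset.mem_erase.mp hj
          exact hsubfix _ _ (hcr i hi) (hcr j (Finset.mem_range.mp hjt))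
        have hPne : P ≠ 0 := by
          rw [hP]
          refine Finset.prod_ne_zero_iff.mpr fun j hj => ?_
          obtain ⟨hji, hjt⟩ := Finset.mem_erase.mp hj
          exact sub_ne_zero.mpr fun hcc =>
            hji (hcinj j (Finset.mem_range.mp hjt) i hi hcc.symm)
        have hXval : deltaS (insert 0 S) a = ((f : ℕ) : F) * c i * P := by
          rw [hdel', hdel]
          have hpow : a ^ (f - 1) * a = a ^ f := by
            rw [← pow_succ, show f - 1 + 1 = f from by omega]
          calc a * ((f : F) * a ^ (f - 1) * P) = (f : F) * (a ^ (f - 1) * a) * P := by ring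
          _ = (f : F) * a ^ f * P := by rw [hpow]
          _ = (f : F) * c i * P := by rw [haf]
        rw [hXval]
        have hXne : ((f : ℕ) : F) * c i * P ≠ 0 :=
          mul_ne_zero (mul_ne_zero hfne (hcne i hi)) hPne
        have hXfix : (((f : ℕ) : F) * c i * P) ^ r = ((f : ℕ) : F) * c i * P := by
          rw [mul_pow, mul_pow, hnatfix, hcr i hi, hPfix]
        exact hsqneg _ hXne (hrfix1 _ hXne hXfix)
  · -- SigmaG part
    intro he
    obtain ⟨e₂, he2'⟩ := he
    have he2 : e = 2 * e₂ := by omega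
    have he2pos : 0 < e₂ := by omega
    have hB2 : 2 * (s * f) ∣ d * (r + 1) := by
      rw [← hgm]
      refine Nat.dvd_gcd ⟨e₂, ?_⟩ ?_
      · rw [mul_assoc, ← hq1, hef, he2]; ring
      · obtain ⟨w, hw⟩ := hsr
        exact ⟨w, by rw [hw]; ring⟩
    have hDe2 : D ∣ e₂ := by
      have h1 : (2 * (s * (r - 1))) * f ∣ (2 * (d * e₂)) * f := by
        have key : (2 * (d * e₂)) * f = (d * (r + 1)) * (r - 1) := by
          have : 2 * (d * e₂) * f = d * (e * f) := by rw [he2]; ring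
          rw [this, ← hef, hq1]; ring
        obtain ⟨c, hc⟩ := hB2
        exact ⟨c, by rw [key, hc]; ring⟩
      have h2 : 2 * (s * (r - 1)) ∣ 2 * (d * e₂) := (Nat.mul_dvd_mul_iff_right hfpos).mp h1
      have h3 : s * (r - 1) ∣ d * e₂ := (Nat.mul_dvd_mul_iff_left (by omega : 0 < 2)).mp h2
      rw [← hdD] at h3
      exact (Nat.mul_dvd_mul_iff_left hdpos).mp h3
    set G := Nat.gcd e₂ (r - 1) with hG
    have hGe2 : G ∣ e₂ := Nat.gcd_dvd_left _ _
    have hGr1 : G ∣ r - 1 := Nat.gcd_dvd_right _ _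
    have hGe : G ∣ e := dvd_trans hGe2 ⟨2, by omega⟩
    have hTG2 : t ≤ G := by
      have h1 : D ∣ G := Nat.dvd_gcd hDe2 hDr1
      have h2 : 0 < G := Nat.gcd_pos_of_pos_left _ he2pos
      exact le_trans htD (Nat.le_of_dvd h2 h1)
    have hfact : r ^ 2 - 1 = G * (e / G) * f := by
      rw [Nat.mul_div_cancel' hGe, hef]
    obtain ⟨S, c, hScard, hS0, hcne, hcinj, hcpow, hmem, hdelta0⟩ :=
      buildS r G (e / G) f t hF hfact (by omega) hfpos hTG2
    have hcr : ∀ i < t, c i ^ r = c i := fun i hi =>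
      hfix1r _ (hcpow i hi (r - 1) hGr1)
    have hcard2 : Fintype.card F / 2 = e₂ * f := by
      have hM : r ^ 2 - 1 = 2 * (e₂ * f) := by rw [hef, he2]; ring
      rw [hF]; omega
    refine ⟨hfeven.mul_left t, by nlinarith [ht1, hf2], S, hScard, Or.inl ?_⟩
    intro a haS
    obtain ⟨i, hi, hane, haf, hdel, hdel'⟩ := hmem a haS
    set P := ∏ j ∈ (Finset.range t).erase i, (c i - c j) with hP
    have hPfix : P ^ r = P := by
      rw [hP, ← Finset.prod_pow]
      refine Finset.prod_congr rfl fun j hj => ?_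
      obtain ⟨hji, hjt⟩ := Finset.mem_erase.mp hj
      exact hsubfix _ _ (hcr i hi) (hcr j (Finset.mem_range.mp hjt))
    have hPne : P ≠ 0 := by
      rw [hP]
      refine Finset.prod_ne_zero_iff.mpr fun j hj => ?_
      obtain ⟨hji, hjt⟩ := Finset.mem_erase.mp hj
      exact sub_ne_zero.mpr fun hcc => hji (hcinj j (Finset.mem_range.mp hjt) i hi hcc.symm)
    rw [hdel]
    have hXne : (f : F) * a ^ (f - 1) * P ≠ 0 :=
      mul_ne_zero (mul_ne_zero hfne (pow_ne_zero _ hane)) hPne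
    rw [FiniteField.isSquare_iff hchar2 hXne, mul_pow, mul_pow]
    have h1 : ((f : ℕ) : F) ^ (Fintype.card F / 2) = 1 :=
      hpowhalf _ (hrfix1 _ hfne hnatfix)
    have h2 : P ^ (Fintype.card F / 2) = 1 := hpowhalf _ (hrfix1 _ hPne hPfix)
    have h3 : (a ^ (f - 1)) ^ (Fintype.card F / 2) = 1 := by
      rw [hcard2, ← pow_mul, show (f - 1) * (e₂ * f) = f * e₂ * (f - 1) from by ring,
        pow_mul, pow_mul, haf, hcpow i hi e₂ hGe2, one_pow]
    rw [h1, h2, h3, one_mul, one_mul]
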